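/- Let δ ∈ [0,1) and let θ, θ̃ > 0 and g ∈ [0, 1/2]. Then (θ/θ̃)·g ≤ (1/θ̃)·(θ - θ̃ - (f_δ''(θ̃))^{-1}(f_δ'(θ) - f_δ'(θ̃))) + 2^{1/(1-δ)}·g. -/

import Mathlib

open Real

private lemma key_log (x g : ℝ) (hx : 0 < x) (hg : 0 ≤ g) (hg2 : g ≤ 1 / 2) :
    x * g ≤ x - 1 - Real.log x + 2 * g := by
  have hsx : 0 < Real.sqrt x := Real.sqrt_pos.2 hx
  have h1 : Real.log (Real.sqrt x) ≤ Real.sqrt x - 1 := Real.log_le_sub_one_of_pos hsx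
  have h2 : Real.log (Real.sqrt x) = Real.log x / 2 := Real.log_sqrt hx.le
  have hsq : Real.sqrt x ^ 2 = x := Real.sq_sqrt hx.le
  -- log x ≤ x / 2
  have hlog2 : Real.log x ≤ x / 2 := by nlinarith [sq_nonneg (Real.sqrt x - 2)]
  have hlog1 : Real.log x ≤ x - 1 := Real.log_le_sub_one_of_pos hx
  rcases le_or_gt x 2 with h | h
  · have : x * g ≤ 2 * g := mul_le_mul_of_nonneg_right h hg
    linarith
  · have h3 : (x - 2) * g ≤ (x - 2) * (1 / 2) :=
      mul_le_mul_of_nonneg_left hg2 (by linarith)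
    nlinarith

private lemma key_pos (δ : ℝ) (h0 : 0 < δ) (h1 : δ < 1) (x g : ℝ) (hx : 0 < x)
    (hg : 0 ≤ g) (hg2 : g ≤ 1 / 2) :
    x * g ≤ x - 1 - (x ^ δ - 1) / δ + (2 : ℝ) ^ (1 / (1 - δ)) * g := by
  set C : ℝ := (2 : ℝ) ^ (1 / (1 - δ)) with hCdef
  have hC : 0 < C := Real.rpow_pos_of_pos two_pos _
  have h1δ : (1 : ℝ) - δ ≠ 0 := by linarith
  -- C ^ (δ - 1) = 1/2
  have hCd1 : C ^ (δ - 1) = 1 / 2 := by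
    rw [hCdef, ← Real.rpow_mul (by norm_num : (0:ℝ) ≤ 2),
      show 1 / (1 - δ) * (δ - 1) = -1 by field_simp; ring, Real.rpow_neg_one]
    norm_num
  -- C ^ δ = C / 2
  have hCd : C ^ δ = C / 2 := by
    have : C ^ δ = C ^ (δ - 1) * C ^ (1 : ℝ) := by
      rw [← Real.rpow_add hC]; ring_nf
    rw [this, hCd1, Real.rpow_one]; ring
  -- Bernoulli
  have bern : ∀ y : ℝ, 0 < y → y ^ δ ≤ 1 + δ * (y - 1) := by
    intro y hy
    have := rpow_one_add_le_one_add_mul_self (s := y - 1) (by linarith) h0.le h1.le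
    simpa using this
  have hbx : x ^ δ ≤ 1 + δ * (x - 1) := bern x hx
  have hbC : C ^ δ ≤ 1 + δ * (C - 1) := bern C hC
  -- tangent line at C : x ^ δ ≤ C/2 + δ * (x - C) / 2
  have htan : x ^ δ ≤ C / 2 + δ * (x - C) / 2 := by
    have hq := bern (x / C) (div_pos hx hC)
    have hxq : (x / C) ^ δ = x ^ δ / C ^ δ := Real.div_rpow hx.le hC.le δ
    have h2 : x ^ δ / C ^ δ ≤ 1 + δ * (x / C - 1) := hxq ▸ hq
    have h3 : x ^ δ ≤ (1 + δ * (x / C - 1)) * C ^ δ := by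
      rw [div_le_iff₀ (Real.rpow_pos_of_pos hC δ)] at h2; exact h2
    calc x ^ δ ≤ (1 + δ * (x / C - 1)) * C ^ δ := h3
      _ = C / 2 + δ * (x - C) / 2 := by rw [hCd]; field_simp; try ring
  rcases le_or_gt x C with h | h
  · have hA : (x ^ δ - 1) / δ ≤ x - 1 := by
      rw [div_le_iff₀ h0]; nlinarith
    have : x * g ≤ C * g := mul_le_mul_of_nonneg_right h hg
    linarith
  · have hB : (x ^ δ - 1) / δ ≤ (x + C) / 2 - 1 := by
      rw [div_le_iff₀ h0]; nlinarith
    have h3 : (x - C) * g ≤ (x - C) * (1 / 2) :=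
      mul_le_mul_of_nonneg_left hg2 (by linarith)
    nlinarith

theorem stmt15 (δ : ℝ) (hδ : δ ∈ Set.Ico (0 : ℝ) 1)
    (corr : ℝ → ℝ → ℝ)
    (hcorr : corr = fun θ θt =>
      if δ = 0 then θt * (Real.log θ - Real.log θt)
      else (1 / δ) * θt ^ (1 - δ) * (θ ^ δ - θt ^ δ)) :
    ∀ θ θt g : ℝ, 0 < θ → 0 < θt → 0 ≤ g → g ≤ 1 / 2 →
      (θ / θt) * g
        ≤ (1 / θt) * (θ - θt - corr θ θt) + (2 : ℝ) ^ (1 / (1 - δ)) * g := by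
  obtain ⟨hδ0, hδ1⟩ := hδ
  intro θ θt g hθ hθt hg hg2
  have hx : 0 < θ / θt := div_pos hθ hθt
  rcases eq_or_lt_of_le hδ0 with hδz | hδp
  · -- δ = 0
    subst hcorr
    simp only [← hδz, if_pos rfl, if_true]
    have hlog : Real.log (θ / θt) = Real.log θ - Real.log θt :=
      Real.log_div hθ.ne' hθt.ne'
    have heq : (1 / θt) * (θ - θt - θt * (Real.log θ - Real.log θt))
        = θ / θt - 1 - Real.log (θ / θt) := by
      rw [hlog]; field_simp
    rw [heq, show (1 : ℝ) / (1 - 0) = 1 by norm_num, Real.rpow_one]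
    exact key_log (θ / θt) g hx hg hg2
  · -- δ > 0
    subst hcorr
    simp only [if_neg hδp.ne']
    have hθtδ : (0:ℝ) < θt ^ δ := Real.rpow_pos_of_pos hθt δ
    have hxd : (θ / θt) ^ δ = θ ^ δ / θt ^ δ := Real.div_rpow hθ.le hθt.le δ
    have hts : θt ^ (1 - δ) = θt / θt ^ δ := by
      rw [Real.rpow_sub hθt, Real.rpow_one]
    have heq : (1 / θt) * (θ - θt - (1 / δ) * θt ^ (1 - δ) * (θ ^ δ - θt ^ δ))
        = θ / θt - 1 - ((θ / θt) ^ δ - 1) / δ := by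
      rw [hts, hxd]; field_simp
    rw [heq]
    exact key_pos δ hδp hδ1 (θ / θt) g hx hg hg2
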